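/- Let p be a prime with p ≡ -1 (mod m), k ≥ 1, and n = p^k n' with p ∤ n', n' ∉ {1, m}. Let ξ be a primitive m-th root of unity with m > 1. Then Φ_n(ξ) = ξ^{(-1)^k φ(n')}. -/
import Mathlib


open Polynomial

private lemma cyclo_eval_inv_aux (n : ℕ) (hn : 1 < n) (ξ : ℂ) (hξ : ξ ≠ 0) :
    (cyclotomic n ℂ).eval ξ⁻¹ = ξ⁻¹ ^ n.totient * (cyclotomic n ℂ).eval ξ := by
  have npos : 0 < n := by omega
  obtain ⟨ζ, hζ⟩ : ∃ ζ : ℂ, IsPrimitiveRoot ζ n :=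
    ⟨_, Complex.isPrimitiveRoot_exp n npos.ne'⟩
  have hprodform := cyclotomic_eq_prod_X_sub_primitiveRoots hζ
  set S := primitiveRoots n ℂ with hS
  have hmem : ∀ ν ∈ S, IsPrimitiveRoot ν n := fun ν hν => (mem_primitiveRoots npos).1 hν
  have hne : ∀ ν ∈ S, ν ≠ 0 := fun ν hν => (hmem ν hν).ne_zero npos.ne'
  have h1 : (cyclotomic n ℂ).eval 0 = 1 := by
    rw [← coeff_zero_eq_eval_zero, cyclotomic_coeff_zero ℂ hn]
  have h0 : ∏ ν ∈ S, (-ν) = 1 := by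
    rw [hprodform] at h1
    simpa [eval_prod] using h1
  have himg : S.image (·⁻¹) = S := by
    apply Finset.Subset.antisymm
    · intro x hx
      obtain ⟨y, hy, rfl⟩ := Finset.mem_image.1 hx
      exact (mem_primitiveRoots npos).2 ((mem_primitiveRoots npos).1 hy).inv
    · intro x hx
      exact Finset.mem_image.2 ⟨x⁻¹, (mem_primitiveRoots npos).2
        ((mem_primitiveRoots npos).1 hx).inv, inv_inv x⟩
  have hcard : S.card = n.totient := hζ.card_primitiveRoots
  have key : ∏ ν ∈ S, (ξ⁻¹ - ν) = ∏ ν ∈ S, (ξ⁻¹ - ν⁻¹) := by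
    conv_lhs => rw [← himg]
    rw [Finset.prod_image (fun a _ b _ h => inv_injective h)]
  rw [hprodform, eval_prod, eval_prod]
  simp only [eval_sub, eval_X, eval_C]
  rw [key]
  have key2 : ∏ ν ∈ S, (ξ⁻¹ - ν⁻¹) = ∏ ν ∈ S, (ξ⁻¹ * (-ν)⁻¹ * (ξ - ν)) := by
    apply Finset.prod_congr rfl
    intro ν hν
    have := hne ν hν
    field_simp
    ring
  rw [key2, Finset.prod_mul_distrib, Finset.prod_mul_distrib, Finset.prod_const, hcard]
  have h0' : ∏ x ∈ S, (-x)⁻¹ = 1 := by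
    rw [Finset.prod_inv_distrib, h0, inv_one]
  rw [h0', mul_one]

private lemma cyclo_eval_aux (m p n' : ℕ) (hm : 1 < m) (hp : p.Prime)
    (hpm : (m : ℤ) ∣ (p : ℤ) + 1) (hpn' : ¬ p ∣ n') (hn'1 : n' ≠ 1) (hn'm : n' ≠ m) :
    ∀ k, 1 ≤ k → ∀ ξ : ℂ, IsPrimitiveRoot ξ m →
      (cyclotomic (p ^ k * n') ℂ).eval ξ = ξ ^ ((-1 : ℤ) ^ k * (n'.totient : ℤ)) := by
  have hn'0 : n' ≠ 0 := fun h => hpn' (h ▸ dvd_zero p)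
  have hn' : 1 < n' := by omega
  intro k
  induction k with
  | zero => omega
  | succ k ih =>
    intro _ ξ hξ
    have hξ0 : ξ ≠ 0 := hξ.ne_zero (by omega)
    have hdvd : m ∣ p + 1 := by exact_mod_cast hpm
    have hpow1 : ξ ^ (p + 1) = 1 := (hξ.pow_eq_one_iff_dvd _).2 hdvd
    have hξp : ξ ^ p = ξ⁻¹ := by
      rw [pow_succ] at hpow1
      field_simp
      linear_combination hpow1
    rcases Nat.eq_zero_or_pos k with rfl | hk
    · -- base case k + 1 = 1
      have hexp := cyclotomic_expand_eq_cyclotomic_mul hp hpn' ℂ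
      have heval := congrArg (Polynomial.eval ξ) hexp
      rw [expand_eval, hξp, eval_mul] at heval
      have hζne : (cyclotomic n' ℂ).eval ξ ≠ 0 := by
        intro h
        haveI : NeZero ((n' : ℂ)) := ⟨Nat.cast_ne_zero.2 hn'0⟩
        have : IsPrimitiveRoot ξ n' := (isRoot_cyclotomic_iff).1 h
        exact hn'm (this.unique hξ)
      rw [cyclo_eval_inv_aux n' hn' ξ hξ0] at heval
      have : (cyclotomic (n' * p) ℂ).eval ξ = ξ⁻¹ ^ n'.totient :=
        (mul_right_cancel₀ hζne heval).symm
      rw [pow_one, mul_comm p n', this]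
      rw [pow_one, neg_one_mul, zpow_neg, zpow_natCast, inv_pow]
    · -- inductive step
      have hdvd' : p ∣ p ^ k * n' := Dvd.dvd.mul_right (dvd_pow_self p hk.ne') n'
      have hexp := cyclotomic_expand_eq_cyclotomic hp hdvd' ℂ
      have heval := congrArg (Polynomial.eval ξ) hexp
      rw [expand_eval, hξp] at heval
      have hIH := ih hk ξ⁻¹ hξ.inv
      have hrw : p ^ k * n' * p = p ^ (k + 1) * n' := by ring
      rw [hrw] at heval
      rw [← heval, hIH, inv_zpow, ← zpow_neg]
      congr 1
      ring

theorem cyclotomic_eval_primitiveRoot_of_prime_neg_one_mod (m p k n n' : ℕ) (hm : 1 < m)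
    (hp : p.Prime) (hpm : (m : ℤ) ∣ (p : ℤ) + 1) (hk : 1 ≤ k)
    (hn : n = p ^ k * n') (hpn' : ¬ p ∣ n') (hn'1 : n' ≠ 1) (hn'm : n' ≠ m)
    (ξ : ℂ) (hξ : IsPrimitiveRoot ξ m) :
    (cyclotomic n ℂ).eval ξ = ξ ^ ((-1 : ℤ) ^ k * (n'.totient : ℤ)) := by
  subst hn
  exact cyclo_eval_aux m p n' hm hp hpm hpn' hn'1 hn'm k hk ξ hξ
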